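/- Gauss–Green formula: Let μ be atomless with supp(ν) ⊆ supp(μ). If f, g are in the strong domain of the generalised Kreĭn–Feller operator Δ_{ν,μ}, then ∫ (Δ_{ν,μ} f) g dν = ∇_μ f(1) g(1) − ∇_μ f(0) g(0) − ∫ ∇_μ f · ∇_μ g dμ, where ∇_μ f(x) = ∇_μ f(0) + ∫_{[0,x]} Δ_{ν,μ} f dν. -/

import Mathlib

open MeasureTheory Set Filter

/-- Distribution function of a measure on `[0,1]`. -/
noncomputable def Fdist (μ : Measure ℝ) (x : ℝ) : ℝ := (μ (Set.Icc 0 x)).toReal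

/-- Pseudo-inverse of the distribution function. -/
noncomputable def Finv (μ : Measure ℝ) (x : ℝ) : ℝ :=
  sInf {y ∈ Set.Icc (0:ℝ) 1 | x ≤ Fdist μ y}

/-- Topological support of a measure. -/
def msupport (μ : Measure ℝ) : Set ℝ := {x | ∀ U : Set ℝ, IsOpen U → x ∈ U → 0 < μ U}



namespace GG

noncomputable def cum (ν : Measure ℝ) (v : ℝ → ℝ) (y : ℝ) : ℝ := ∫ t in Set.Icc 0 y, v t ∂ν

lemma cum_sm (ν : Measure ℝ) [SigmaFinite ν] (v : ℝ → ℝ) (hv : Measurable v) :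
    StronglyMeasurable (cum ν v) := by
  have hset : MeasurableSet {p : ℝ × ℝ | 0 ≤ p.2 ∧ p.2 ≤ p.1} :=
    (measurableSet_le measurable_const measurable_snd).inter
      (measurableSet_le measurable_snd measurable_fst)
  have hH : StronglyMeasurable ({p : ℝ × ℝ | 0 ≤ p.2 ∧ p.2 ≤ p.1}.indicator
      (fun p : ℝ × ℝ => v p.2)) :=
    ((hv.comp measurable_snd).indicator hset).stronglyMeasurable
  have heq : cum ν v = fun y => ∫ t, ({p : ℝ × ℝ | 0 ≤ p.2 ∧ p.2 ≤ p.1}.indicator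
      (fun p : ℝ × ℝ => v p.2)) (y, t) ∂ν := by
    funext y
    rw [cum, ← integral_indicator measurableSet_Icc]
    apply integral_congr_ae
    filter_upwards with t
    by_cases h : t ∈ Set.Icc (0:ℝ) y
    · rw [Set.indicator_of_mem h, Set.indicator_of_mem]
      exact Set.mem_Icc.mp h
    · rw [Set.indicator_of_notMem h, Set.indicator_of_notMem]
      simpa [Set.mem_Icc] using h
  rw [heq]
  exact hH.integral_prod_right'

lemma intI {α : Measure ℝ} [IsFiniteMeasure α] {v : ℝ → ℝ}
    (hm : AEStronglyMeasurable v (α.restrict (Set.Icc 0 1))) (C : ℝ)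
    (hb : ∀ x ∈ Set.Icc (0:ℝ) 1, |v x| ≤ C) :
    Integrable v (α.restrict (Set.Icc (0:ℝ) 1)) := by
  refine Integrable.mono' (integrable_const C) hm ?_
  filter_upwards [ae_restrict_mem measurableSet_Icc] with x hx
  exact hb x hx

lemma cum_bound (ν : Measure ℝ) [IsProbabilityMeasure ν]
    (hνc : ν (Set.Icc (0:ℝ) 1)ᶜ = 0) (v : ℝ → ℝ) (C : ℝ)
    (hb : ∀ x ∈ Set.Icc (0:ℝ) 1, |v x| ≤ C) (y : ℝ) : |cum ν v y| ≤ C := by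
  have hC : 0 ≤ C := le_trans (abs_nonneg _) (hb 0 (by simp))
  have h1 : ‖∫ t in Set.Icc 0 y, v t ∂ν‖ ≤ C * ((ν.restrict (Set.Icc 0 y)) Set.univ).toReal := by
    apply norm_integral_le_of_norm_le_const
    have hae : ∀ᵐ x ∂ν, x ∈ Set.Icc (0:ℝ) 1 := by
      rw [ae_iff]; exact hνc
    filter_upwards [ae_restrict_of_ae hae] with x hx
    simpa using hb x hx
  rw [Measure.restrict_apply_univ] at h1
  have h2 : (ν (Set.Icc 0 y)).toReal ≤ 1 := by
    simpa using ENNReal.toReal_mono (by simp) (prob_le_one (μ := ν) (s := Set.Icc 0 y))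
  have h3 : (0:ℝ) ≤ (ν (Set.Icc 0 y)).toReal := ENNReal.toReal_nonneg
  rw [Real.norm_eq_abs] at h1
  rw [cum]
  nlinarith

lemma star (ν α : Measure ℝ) [IsProbabilityMeasure ν] [IsFiniteMeasure α]
    (w v : ℝ → ℝ) (hw : StronglyMeasurable w) (hv : Measurable v)
    (Cw Cv : ℝ) (hbw : ∀ x ∈ Set.Icc (0:ℝ) 1, |w x| ≤ Cw)
    (hbv : ∀ x ∈ Set.Icc (0:ℝ) 1, |v x| ≤ Cv) :
    ∫ y in Set.Icc (0:ℝ) 1, w y * (∫ t in Set.Icc 0 y, v t ∂ν) ∂α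
      = ∫ t in Set.Icc (0:ℝ) 1, v t * (∫ y in Set.Icc t 1, w y ∂α) ∂ν := by
  set I := Set.Icc (0:ℝ) 1 with hI
  have hCw : 0 ≤ Cw := le_trans (abs_nonneg _) (hbw 0 (by simp [hI]))
  have hCv : 0 ≤ Cv := le_trans (abs_nonneg _) (hbv 0 (by simp [hI]))
  set S : Set (ℝ × ℝ) := {q : ℝ × ℝ | q.2 ≤ q.1} with hS
  have hSm : MeasurableSet S := measurableSet_le measurable_snd measurable_fst
  set H : ℝ × ℝ → ℝ := fun p => w p.1 * (S.indicator (fun q : ℝ × ℝ => v q.2) p) with hH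
  have hHm : StronglyMeasurable H :=
    (hw.comp_measurable measurable_fst).mul
      ((hv.comp measurable_snd).indicator hSm).stronglyMeasurable
  have hint : Integrable (Function.uncurry (fun y t => H (y, t))) ((α.restrict I).prod (ν.restrict I)) := by
    have huncurry : Function.uncurry (fun y t => H (y, t)) = H := rfl
    rw [huncurry]
    refine Integrable.mono' (integrable_const (Cw * Cv)) hHm.aestronglyMeasurable ?_
    rw [Measure.prod_restrict]
    filter_upwards [ae_restrict_mem (measurableSet_Icc.prod measurableSet_Icc)] with p hp
    obtain ⟨hp1, hp2⟩ := hp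
    have h1 : |w p.1| ≤ Cw := hbw _ hp1
    have h2 : |S.indicator (fun q : ℝ × ℝ => v q.2) p| ≤ Cv := by
      by_cases h : p ∈ S
      · rw [Set.indicator_of_mem h]; exact hbv _ hp2
      · rw [Set.indicator_of_notMem h]; simpa using hCv
    calc ‖H p‖ = |w p.1| * |S.indicator (fun q : ℝ × ℝ => v q.2) p| := by
          rw [hH]; exact abs_mul _ _
      _ ≤ Cw * Cv := mul_le_mul h1 h2 (abs_nonneg _) hCw
  have key := integral_integral_swap hint
  have hL : ∫ y in I, w y * (∫ t in Set.Icc 0 y, v t ∂ν) ∂α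
      = ∫ y in I, (∫ t in I, H (y, t) ∂ν) ∂α := by
    apply setIntegral_congr_fun measurableSet_Icc
    intro y hy
    have hset : Set.Iic y ∩ I = Set.Icc 0 y := by
      ext x
      simp only [Set.mem_inter_iff, Set.mem_Iic, hI, Set.mem_Icc]
      exact ⟨fun ⟨h1, h2, _⟩ => ⟨h2, h1⟩, fun ⟨h1, h2⟩ => ⟨h2, h1, h2.trans hy.2⟩⟩
    have hHeq : ∀ t, H (y, t) = w y * (Set.Iic y).indicator v t := by
      intro t
      by_cases h : t ≤ y
      · rw [hH]
        simp only []
        rw [Set.indicator_of_mem (by exact h : (y, t) ∈ S),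
          Set.indicator_of_mem (Set.mem_Iic.mpr h)]
      · rw [hH]
        simp only []
        rw [Set.indicator_of_notMem (by exact h : (y, t) ∉ S),
          Set.indicator_of_notMem (fun hc => h (Set.mem_Iic.mp hc)), mul_zero]
    calc w y * (∫ t in Set.Icc 0 y, v t ∂ν)
        = w y * (∫ t in I, (Set.Iic y).indicator v t ∂ν) := by
          rw [integral_indicator measurableSet_Iic, Measure.restrict_restrict measurableSet_Iic,
            hset]
      _ = ∫ t in I, w y * (Set.Iic y).indicator v t ∂ν := (integral_const_mul _ _).symm
      _ = ∫ t in I, H (y, t) ∂ν := by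
          apply integral_congr_ae
          filter_upwards with t
          exact (hHeq t).symm
  have hR : ∫ t in I, (∫ y in I, H (y, t) ∂α) ∂ν
      = ∫ t in I, v t * (∫ y in Set.Icc t 1, w y ∂α) ∂ν := by
    apply setIntegral_congr_fun measurableSet_Icc
    intro t ht
    have hset : Set.Ici t ∩ I = Set.Icc t 1 := by
      ext x
      simp only [Set.mem_inter_iff, Set.mem_Ici, hI, Set.mem_Icc]
      exact ⟨fun ⟨h1, _, h3⟩ => ⟨h1, h3⟩, fun ⟨h1, h2⟩ => ⟨h1, ht.1.trans h1, h2⟩⟩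
    have hHeq : ∀ y, H (y, t) = (Set.Ici t).indicator (fun y => w y * v t) y := by
      intro y
      by_cases h : t ≤ y
      · rw [hH]
        simp only []
        rw [Set.indicator_of_mem (by exact h : (y, t) ∈ S),
          Set.indicator_of_mem (Set.mem_Ici.mpr h)]
      · rw [hH]
        simp only []
        rw [Set.indicator_of_notMem (by exact h : (y, t) ∉ S),
          Set.indicator_of_notMem (fun hc => h (Set.mem_Ici.mp hc)), mul_zero]
    calc ∫ y in I, H (y, t) ∂α
        = ∫ y in I, (Set.Ici t).indicator (fun y => w y * v t) y ∂α := by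
          apply integral_congr_ae
          filter_upwards with y
          exact hHeq y
      _ = ∫ y in Set.Icc t 1, w y * v t ∂α := by
          rw [integral_indicator measurableSet_Ici, Measure.restrict_restrict measurableSet_Ici,
            hset]
      _ = v t * (∫ y in Set.Icc t 1, w y ∂α) := by
          rw [← integral_const_mul]
          congr 1
          funext y
          ring
  rw [hL, ← hR]
  exact key



lemma Fdist_mono (μ : Measure ℝ) [IsFiniteMeasure μ] : Monotone (Fdist μ) := by
  intro a b h
  exact ENNReal.toReal_mono (measure_ne_top μ _) (measure_mono (Set.Icc_subset_Icc_right h))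

lemma Fdist_sm (μ : Measure ℝ) [IsFiniteMeasure μ] : StronglyMeasurable (Fdist μ) :=
  (Fdist_mono μ).measurable.stronglyMeasurable

lemma Fdist_bound (μ : Measure ℝ) [IsProbabilityMeasure μ] (x : ℝ) : |Fdist μ x| ≤ 1 := by
  rw [Fdist, abs_of_nonneg ENNReal.toReal_nonneg]
  simpa using ENNReal.toReal_mono (by simp) (prob_le_one (μ := μ) (s := Set.Icc 0 x))

lemma meas_Icc01 (μ : Measure ℝ) [IsProbabilityMeasure μ] (hμc : μ (Set.Icc (0:ℝ) 1)ᶜ = 0) :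
    μ (Set.Icc (0:ℝ) 1) = 1 := by
  exact (prob_compl_eq_zero_iff measurableSet_Icc).mp hμc

lemma Fdist_one (μ : Measure ℝ) [IsProbabilityMeasure μ] (hμc : μ (Set.Icc (0:ℝ) 1)ᶜ = 0) :
    Fdist μ 1 = 1 := by
  rw [Fdist, meas_Icc01 μ hμc]; simp

lemma tail (μ : Measure ℝ) [IsProbabilityMeasure μ] [NullSingletonClass μ]
    (hμc : μ (Set.Icc (0:ℝ) 1)ᶜ = 0) {t : ℝ} (ht : t ∈ Set.Icc (0:ℝ) 1) :
    (μ (Set.Icc t 1)).toReal = 1 - Fdist μ t := by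
  have hIcc : Set.Icc t 1 = Set.Ioc t 1 ∪ {t} := by
    ext x
    simp only [Set.mem_Icc, Set.mem_union, Set.mem_Ioc, Set.mem_singleton_iff]
    constructor
    · rintro ⟨h1, h2⟩
      rcases eq_or_lt_of_le h1 with h | h
      · exact Or.inr h.symm
      · exact Or.inl ⟨h, h2⟩
    · rintro (⟨h1, h2⟩ | rfl)
      · exact ⟨le_of_lt h1, h2⟩
      · exact ⟨le_rfl, ht.2⟩
  have h1 : μ (Set.Icc t 1) = μ (Set.Ioc t 1) := by
    rw [hIcc]
    refine le_antisymm ((measure_union_le _ _).trans ?_) (measure_mono Set.subset_union_left)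
    simp [measure_singleton]
  have hsplit : μ (Set.Icc 0 t) + μ (Set.Ioc t 1) = 1 := by
    rw [← measure_union ((Set.Iic_disjoint_Ioc le_rfl).mono Set.Icc_subset_Iic_self le_rfl) measurableSet_Ioc,
      Set.Icc_union_Ioc_eq_Icc ht.1 ht.2, meas_Icc01 μ hμc]
  have h2 : (μ (Set.Icc 0 t)).toReal + (μ (Set.Ioc t 1)).toReal = 1 := by
    rw [← ENNReal.toReal_add (measure_ne_top μ _) (measure_ne_top μ _), hsplit]; simp
  rw [h1, Fdist]
  linarith

end GG


theorem stmt_9 (μ ν : Measure ℝ) [IsProbabilityMeasure μ] [IsProbabilityMeasure ν] [NullSingletonClass μ]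
    (hμc : μ (Set.Icc (0:ℝ) 1)ᶜ = 0) (hνc : ν (Set.Icc (0:ℝ) 1)ᶜ = 0)
    (hν0 : ν {(0:ℝ)} = 0) (hν1 : ν {(1:ℝ)} = 0)
    (hsupp : msupport ν ⊆ msupport μ)
    (f g fΔ gΔ : ℝ → ℝ) (bf bg : ℝ) (hfΔ : Continuous fΔ) (hgΔ : Continuous gΔ)
    (hf : ∀ x ∈ Set.Icc (0:ℝ) 1,
      f x = f 0 + bf * Fdist μ x + ∫ y in Set.Icc 0 x, (Fdist μ x - Fdist μ y) * fΔ y ∂ν)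
    (hg : ∀ x ∈ Set.Icc (0:ℝ) 1,
      g x = g 0 + bg * Fdist μ x + ∫ y in Set.Icc 0 x, (Fdist μ x - Fdist μ y) * gΔ y ∂ν) :
    ∫ y in Set.Icc (0:ℝ) 1, fΔ y * g y ∂ν =
      (bf + ∫ y in Set.Icc (0:ℝ) 1, fΔ y ∂ν) * g 1 - bf * g 0 -
        ∫ y in Set.Icc (0:ℝ) 1,
          (bf + ∫ t in Set.Icc 0 y, fΔ t ∂ν) * (bg + ∫ t in Set.Icc 0 y, gΔ t ∂ν) ∂μ := by
  classical
  have hνI : ν (Set.Icc (0:ℝ) 1) = 1 := GG.meas_Icc01 ν hνc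
  have hμI : μ (Set.Icc (0:ℝ) 1) = 1 := GG.meas_Icc01 μ hμc
  have hF1 : Fdist μ 1 = 1 := GG.Fdist_one μ hμc
  have hFsm : StronglyMeasurable (Fdist μ) := GG.Fdist_sm μ
  have hFb : ∀ x, |Fdist μ x| ≤ 1 := GG.Fdist_bound μ
  obtain ⟨Cf, hCf⟩ := isCompact_Icc.exists_bound_of_continuousOn
    (hfΔ.continuousOn (s := Set.Icc (0:ℝ) 1))
  obtain ⟨Cg, hCg⟩ := isCompact_Icc.exists_bound_of_continuousOn
    (hgΔ.continuousOn (s := Set.Icc (0:ℝ) 1))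
  have hbf' : ∀ x ∈ Set.Icc (0:ℝ) 1, |fΔ x| ≤ Cf := fun x hx => by simpa using hCf x hx
  have hbg' : ∀ x ∈ Set.Icc (0:ℝ) 1, |gΔ x| ≤ Cg := fun x hx => by simpa using hCg x hx
  have hCf0 : 0 ≤ Cf := le_trans (abs_nonneg _) (hbf' 0 (by simp))
  have hCg0 : 0 ≤ Cg := le_trans (abs_nonneg _) (hbg' 0 (by simp))
  have hfm : Measurable fΔ := hfΔ.measurable
  have hgm : Measurable gΔ := hgΔ.measurable
  have hΦsm : StronglyMeasurable (fun y => ∫ t in Set.Icc 0 y, fΔ t ∂ν) :=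
    GG.cum_sm ν fΔ hfm
  have hΨsm : StronglyMeasurable (fun y => ∫ t in Set.Icc 0 y, gΔ t ∂ν) :=
    GG.cum_sm ν gΔ hgm
  have hΘsm : StronglyMeasurable (fun y => ∫ t in Set.Icc 0 y, Fdist μ t * gΔ t ∂ν) :=
    GG.cum_sm ν _ (hFsm.measurable.mul hgm)
  have hΦb : ∀ y, |∫ t in Set.Icc 0 y, fΔ t ∂ν| ≤ Cf := GG.cum_bound ν hνc fΔ Cf hbf'
  have hΨb : ∀ y, |∫ t in Set.Icc 0 y, gΔ t ∂ν| ≤ Cg := GG.cum_bound ν hνc gΔ Cg hbg'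
  have hFgb : ∀ x ∈ Set.Icc (0:ℝ) 1, |Fdist μ x * gΔ x| ≤ Cg := by
    intro x hx
    rw [abs_mul]
    have := mul_le_mul (hFb x) (hbg' x hx) (abs_nonneg _) zero_le_one
    simpa using this
  have hΘb : ∀ y, |∫ t in Set.Icc 0 y, Fdist μ t * gΔ t ∂ν| ≤ Cg :=
    GG.cum_bound ν hνc _ Cg hFgb
  -- integrabilities on ν.restrict [0,1]
  have IfΔ : Integrable fΔ (ν.restrict (Set.Icc 0 1)) := GG.intI hfm.aestronglyMeasurable Cf hbf'
  have IgΔ : Integrable gΔ (ν.restrict (Set.Icc 0 1)) := GG.intI hgm.aestronglyMeasurable Cg hbg'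
  have IfF : Integrable (fun y => fΔ y * Fdist μ y) (ν.restrict (Set.Icc 0 1)) := by
    refine GG.intI (hfm.mul hFsm.measurable).aestronglyMeasurable Cf ?_
    intro x hx
    rw [abs_mul]
    have := mul_le_mul (hbf' x hx) (hFb x) (abs_nonneg _) hCf0
    simpa using this
  have IfFΨ : Integrable (fun y => fΔ y * (Fdist μ y * ∫ t in Set.Icc 0 y, gΔ t ∂ν))
      (ν.restrict (Set.Icc 0 1)) := by
    refine GG.intI (hfm.mul (hFsm.measurable.mul hΨsm.measurable)).aestronglyMeasurable
      (Cf * Cg) ?_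
    intro x hx
    rw [abs_mul, abs_mul]
    have h1 : |Fdist μ x| * |∫ t in Set.Icc 0 x, gΔ t ∂ν| ≤ 1 * Cg :=
      mul_le_mul (hFb x) (hΨb x) (abs_nonneg _) zero_le_one
    have := mul_le_mul (hbf' x hx) h1 (mul_nonneg (abs_nonneg _) (abs_nonneg _)) hCf0
    simpa using this
  have IfΘ : Integrable (fun y => fΔ y * ∫ t in Set.Icc 0 y, Fdist μ t * gΔ t ∂ν)
      (ν.restrict (Set.Icc 0 1)) := by
    refine GG.intI (hfm.mul hΘsm.measurable).aestronglyMeasurable (Cf * Cg) ?_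
    intro x hx
    rw [abs_mul]
    exact mul_le_mul (hbf' x hx) (hΘb x) (abs_nonneg _) hCf0
  -- inner split
  have hsplitg : ∀ y ∈ Set.Icc (0:ℝ) 1,
      (∫ t in Set.Icc 0 y, (Fdist μ y - Fdist μ t) * gΔ t ∂ν)
        = Fdist μ y * (∫ t in Set.Icc 0 y, gΔ t ∂ν)
          - ∫ t in Set.Icc 0 y, Fdist μ t * gΔ t ∂ν := by
    intro y hy
    have hsub : Set.Icc (0:ℝ) y ⊆ Set.Icc (0:ℝ) 1 := Set.Icc_subset_Icc_right hy.2
    have hle : ν.restrict (Set.Icc 0 y) ≤ ν.restrict (Set.Icc 0 1) :=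
      Measure.restrict_mono hsub le_rfl
    have Ig : Integrable gΔ (ν.restrict (Set.Icc 0 y)) := IgΔ.mono_measure hle
    have IFg : Integrable (fun t => Fdist μ t * gΔ t) (ν.restrict (Set.Icc 0 y)) :=
      (GG.intI (hFsm.measurable.mul hgm).aestronglyMeasurable Cg hFgb).mono_measure hle
    have h1 : (∫ t in Set.Icc 0 y, (Fdist μ y - Fdist μ t) * gΔ t ∂ν)
        = ∫ t in Set.Icc 0 y, (Fdist μ y * gΔ t - Fdist μ t * gΔ t) ∂ν := by
      apply integral_congr_ae
      filter_upwards with t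
      ring
    rw [h1, integral_sub (Ig.const_mul _) IFg, integral_const_mul]
  -- LHS expansion
  have hL : (∫ y in Set.Icc (0:ℝ) 1, fΔ y * g y ∂ν)
      = g 0 * (∫ y in Set.Icc (0:ℝ) 1, fΔ y ∂ν)
        + bg * (∫ y in Set.Icc (0:ℝ) 1, fΔ y * Fdist μ y ∂ν)
        + ((∫ y in Set.Icc (0:ℝ) 1, fΔ y * (Fdist μ y * ∫ t in Set.Icc 0 y, gΔ t ∂ν) ∂ν)
            - (∫ y in Set.Icc (0:ℝ) 1, fΔ y * ∫ t in Set.Icc 0 y, Fdist μ t * gΔ t ∂ν ∂ν)) := by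
    have h1 : (∫ y in Set.Icc (0:ℝ) 1, fΔ y * g y ∂ν)
        = ∫ y in Set.Icc (0:ℝ) 1,
            (g 0 * fΔ y + bg * (fΔ y * Fdist μ y)
              + (fΔ y * (Fdist μ y * ∫ t in Set.Icc 0 y, gΔ t ∂ν)
                 - fΔ y * ∫ t in Set.Icc 0 y, Fdist μ t * gΔ t ∂ν)) ∂ν := by
      apply setIntegral_congr_fun measurableSet_Icc
      intro y hy
      dsimp only
      rw [hg y hy, hsplitg y hy]
      ring
    have IB1 : Integrable (fun y => g 0 * fΔ y) (ν.restrict (Set.Icc 0 1)) :=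
      IfΔ.const_mul (g 0)
    have IB2 : Integrable (fun y => bg * (fΔ y * Fdist μ y)) (ν.restrict (Set.Icc 0 1)) :=
      IfF.const_mul bg
    have IA : Integrable (fun y => g 0 * fΔ y + bg * (fΔ y * Fdist μ y))
        (ν.restrict (Set.Icc 0 1)) := IB1.add IB2
    have IB : Integrable (fun y => fΔ y * (Fdist μ y * ∫ t in Set.Icc 0 y, gΔ t ∂ν)
        - fΔ y * ∫ t in Set.Icc 0 y, Fdist μ t * gΔ t ∂ν) (ν.restrict (Set.Icc 0 1)) :=
      IfFΨ.sub IfΘ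
    rw [h1, integral_add IA IB, integral_add IB1 IB2, integral_sub IfFΨ IfΘ,
      integral_const_mul, integral_const_mul]
  -- g at 1
  have hg1 : g 1 = g 0 + bg + (∫ t in Set.Icc (0:ℝ) 1, (1 - Fdist μ t) * gΔ t ∂ν) := by
    have h := hg 1 (by constructor <;> norm_num)
    rw [hF1, mul_one] at h
    exact h
  -- Q expansion
  have hQ : (∫ y in Set.Icc (0:ℝ) 1,
        (bf + ∫ t in Set.Icc 0 y, fΔ t ∂ν) * (bg + ∫ t in Set.Icc 0 y, gΔ t ∂ν) ∂μ)
      = bf * bg + bf * (∫ y in Set.Icc (0:ℝ) 1, (∫ t in Set.Icc 0 y, gΔ t ∂ν) ∂μ)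
        + bg * (∫ y in Set.Icc (0:ℝ) 1, (∫ t in Set.Icc 0 y, fΔ t ∂ν) ∂μ)
        + (∫ y in Set.Icc (0:ℝ) 1,
            (∫ t in Set.Icc 0 y, fΔ t ∂ν) * (∫ t in Set.Icc 0 y, gΔ t ∂ν) ∂μ) := by
    have IΨ : Integrable (fun y => ∫ t in Set.Icc 0 y, gΔ t ∂ν) (μ.restrict (Set.Icc 0 1)) :=
      GG.intI hΨsm.measurable.aestronglyMeasurable Cg (fun x _ => hΨb x)
    have IΦ : Integrable (fun y => ∫ t in Set.Icc 0 y, fΔ t ∂ν) (μ.restrict (Set.Icc 0 1)) :=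
      GG.intI hΦsm.measurable.aestronglyMeasurable Cf (fun x _ => hΦb x)
    have IΦΨ : Integrable
        (fun y => (∫ t in Set.Icc 0 y, fΔ t ∂ν) * (∫ t in Set.Icc 0 y, gΔ t ∂ν))
        (μ.restrict (Set.Icc 0 1)) :=
      GG.intI (hΦsm.measurable.mul hΨsm.measurable).aestronglyMeasurable (Cf * Cg)
        (fun x _ => by rw [abs_mul]; exact mul_le_mul (hΦb x) (hΨb x) (abs_nonneg _) hCf0)
    have h1 : (∫ y in Set.Icc (0:ℝ) 1,
          (bf + ∫ t in Set.Icc 0 y, fΔ t ∂ν) * (bg + ∫ t in Set.Icc 0 y, gΔ t ∂ν) ∂μ)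
        = ∫ y in Set.Icc (0:ℝ) 1,
            (bf * bg + bf * (∫ t in Set.Icc 0 y, gΔ t ∂ν)
              + bg * (∫ t in Set.Icc 0 y, fΔ t ∂ν)
              + (∫ t in Set.Icc 0 y, fΔ t ∂ν) * (∫ t in Set.Icc 0 y, gΔ t ∂ν)) ∂μ := by
      apply integral_congr_ae
      filter_upwards with y
      ring
    have J0 : Integrable (fun _ : ℝ => bf * bg) (μ.restrict (Set.Icc 0 1)) := integrable_const _
    have J1 : Integrable (fun y => bf * ∫ t in Set.Icc 0 y, gΔ t ∂ν)
        (μ.restrict (Set.Icc 0 1)) := IΨ.const_mul bf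
    have J2 : Integrable (fun y => bg * ∫ t in Set.Icc 0 y, fΔ t ∂ν)
        (μ.restrict (Set.Icc 0 1)) := IΦ.const_mul bg
    have J01 : Integrable (fun y => bf * bg + bf * ∫ t in Set.Icc 0 y, gΔ t ∂ν)
        (μ.restrict (Set.Icc 0 1)) := J0.add J1
    have J012 : Integrable (fun y => bf * bg + bf * (∫ t in Set.Icc 0 y, gΔ t ∂ν)
        + bg * ∫ t in Set.Icc 0 y, fΔ t ∂ν) (μ.restrict (Set.Icc 0 1)) := J01.add J2
    rw [h1, integral_add J012 IΦΨ, integral_add J01 J2, integral_add J0 J1,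
      integral_const_mul, integral_const_mul, integral_const_mul, integral_const, measureReal_def,
      Measure.restrict_apply_univ, hμI]
    simp
  -- star applications
  have hSf : (∫ y in Set.Icc (0:ℝ) 1, (∫ t in Set.Icc 0 y, fΔ t ∂ν) ∂μ)
      = ∫ t in Set.Icc (0:ℝ) 1, fΔ t * (1 - Fdist μ t) ∂ν := by
    have h := GG.star ν μ (fun _ => (1:ℝ)) fΔ stronglyMeasurable_const hfm 1 Cf
      (fun x _ => by norm_num) hbf'
    simp only [one_mul] at h
    rw [h]
    apply setIntegral_congr_fun measurableSet_Icc
    intro t ht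
    dsimp only
    rw [setIntegral_const, measureReal_def, GG.tail μ hμc ht]
    simp
  have hSg : (∫ y in Set.Icc (0:ℝ) 1, (∫ t in Set.Icc 0 y, gΔ t ∂ν) ∂μ)
      = ∫ t in Set.Icc (0:ℝ) 1, gΔ t * (1 - Fdist μ t) ∂ν := by
    have h := GG.star ν μ (fun _ => (1:ℝ)) gΔ stronglyMeasurable_const hgm 1 Cg
      (fun x _ => by norm_num) hbg'
    simp only [one_mul] at h
    rw [h]
    apply setIntegral_congr_fun measurableSet_Icc
    intro t ht
    dsimp only
    rw [setIntegral_const, measureReal_def, GG.tail μ hμc ht]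
    simp
  have hMstar : (∫ y in Set.Icc (0:ℝ) 1,
        (∫ t in Set.Icc 0 y, fΔ t ∂ν) * (∫ t in Set.Icc 0 y, gΔ t ∂ν) ∂μ)
      = ∫ t in Set.Icc (0:ℝ) 1,
          fΔ t * (∫ y in Set.Icc t 1, (∫ s in Set.Icc 0 y, gΔ s ∂ν) ∂μ) ∂ν := by
    have h := GG.star ν μ (fun y => ∫ t in Set.Icc 0 y, gΔ t ∂ν) fΔ hΨsm hfm Cg Cf
      (fun x _ => hΨb x) hbf'
    rw [← h]
    apply setIntegral_congr_fun measurableSet_Icc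
    intro y hy
    dsimp only
    ring
  -- inner integral computation
  have hinner : ∀ t ∈ Set.Icc (0:ℝ) 1,
      (∫ y in Set.Icc t 1, (∫ s in Set.Icc 0 y, gΔ s ∂ν) ∂μ)
        = (∫ s in Set.Icc (0:ℝ) 1, (1 - Fdist μ s) * gΔ s ∂ν)
          - (Fdist μ t * (∫ s in Set.Icc 0 t, gΔ s ∂ν)
             - ∫ s in Set.Icc 0 t, Fdist μ s * gΔ s ∂ν) := by
    intro t ht
    have hsub : Set.Icc t 1 ⊆ Set.Icc (0:ℝ) 1 := Set.Icc_subset_Icc ht.1 le_rfl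
    have h := GG.star ν (μ.restrict (Set.Icc t 1)) (fun _ => (1:ℝ)) gΔ
      stronglyMeasurable_const hgm 1 Cg (fun x _ => by norm_num) hbg'
    simp only [one_mul] at h
    have hL1 : (∫ y in Set.Icc (0:ℝ) 1, (∫ s in Set.Icc 0 y, gΔ s ∂ν)
          ∂(μ.restrict (Set.Icc t 1)))
        = ∫ y in Set.Icc t 1, (∫ s in Set.Icc 0 y, gΔ s ∂ν) ∂μ := by
      rw [Measure.restrict_restrict measurableSet_Icc, Set.inter_eq_right.mpr hsub]
    have hR1 : ∀ s ∈ Set.Icc (0:ℝ) 1,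
        gΔ s * (∫ y in Set.Icc s 1, (1:ℝ) ∂(μ.restrict (Set.Icc t 1)))
          = gΔ s * (μ (Set.Icc (s ⊔ t) 1)).toReal := by
      intro s hs
      rw [setIntegral_const, measureReal_def, Measure.restrict_apply measurableSet_Icc, Set.Icc_inter_Icc]
      simp
    have hpt : ∀ s ∈ Set.Icc (0:ℝ) 1,
        gΔ s * (μ (Set.Icc (s ⊔ t) 1)).toReal
          = (1 - Fdist μ s) * gΔ s
            - (Set.Iic t).indicator (fun s => (Fdist μ t - Fdist μ s) * gΔ s) s := by
      intro s hs
      have hst : s ⊔ t ∈ Set.Icc (0:ℝ) 1 := ⟨le_trans hs.1 le_sup_left, sup_le hs.2 ht.2⟩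
      rw [GG.tail μ hμc hst]
      by_cases hcase : s ≤ t
      · rw [sup_eq_right.mpr hcase, Set.indicator_of_mem (Set.mem_Iic.mpr hcase)]
        ring
      · rw [sup_eq_left.mpr (le_of_not_ge hcase),
          Set.indicator_of_notMem (fun hc => hcase (Set.mem_Iic.mp hc))]
        ring
    have I1 : Integrable (fun s => (1 - Fdist μ s) * gΔ s) (ν.restrict (Set.Icc 0 1)) := by
      refine GG.intI ((measurable_const.sub hFsm.measurable).mul hgm).aestronglyMeasurable
        (2 * Cg) ?_
      intro x hx
      rw [abs_mul]
      have h1 : |1 - Fdist μ x| ≤ 2 := by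
        have h2 := hFb x
        rw [abs_le] at h2 ⊢
        constructor <;> linarith [h2.1, h2.2]
      have := mul_le_mul h1 (hbg' x hx) (abs_nonneg _) (by norm_num)
      simpa using this
    have I2 : Integrable ((Set.Iic t).indicator (fun s => (Fdist μ t - Fdist μ s) * gΔ s))
        (ν.restrict (Set.Icc 0 1)) := by
      refine GG.intI
        (((measurable_const.sub hFsm.measurable).mul hgm).indicator
          measurableSet_Iic).aestronglyMeasurable (2 * Cg) ?_
      intro x hx
      by_cases hmem : x ∈ Set.Iic t
      · rw [Set.indicator_of_mem hmem, abs_mul]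
        have h1 : |Fdist μ t - Fdist μ x| ≤ 2 := by
          have h2 := hFb x
          have h3 := hFb t
          rw [abs_le] at h2 h3 ⊢
          constructor <;> linarith [h2.1, h2.2, h3.1, h3.2]
        have := mul_le_mul h1 (hbg' x hx) (abs_nonneg _) (by norm_num)
        simpa using this
      · rw [Set.indicator_of_notMem hmem, abs_zero]
        positivity
    have hsetI : Set.Iic t ∩ Set.Icc (0:ℝ) 1 = Set.Icc 0 t := by
      ext x
      simp only [Set.mem_inter_iff, Set.mem_Iic, Set.mem_Icc]
      exact ⟨fun ⟨h1, h2, _⟩ => ⟨h2, h1⟩, fun ⟨h1, h2⟩ => ⟨h2, h1, h2.trans ht.2⟩⟩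
    have hind : (∫ s in Set.Icc (0:ℝ) 1,
        (Set.Iic t).indicator (fun s => (Fdist μ t - Fdist μ s) * gΔ s) s ∂ν)
          = Fdist μ t * (∫ s in Set.Icc 0 t, gΔ s ∂ν)
            - ∫ s in Set.Icc 0 t, Fdist μ s * gΔ s ∂ν := by
      rw [integral_indicator measurableSet_Iic, Measure.restrict_restrict measurableSet_Iic,
        hsetI]
      exact hsplitg t ht
    rw [← hL1, h]
    have hmid : (∫ s in Set.Icc (0:ℝ) 1,
          gΔ s * (∫ y in Set.Icc s 1, (1:ℝ) ∂(μ.restrict (Set.Icc t 1))) ∂ν)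
        = ∫ s in Set.Icc (0:ℝ) 1,
            ((1 - Fdist μ s) * gΔ s
              - (Set.Iic t).indicator (fun s => (Fdist μ t - Fdist μ s) * gΔ s) s) ∂ν := by
      apply setIntegral_congr_fun measurableSet_Icc
      intro s hs
      dsimp only
      rw [hR1 s hs, hpt s hs]
    rw [hmid, integral_sub I1 I2, hind]
  -- M final
  have hMfinal : (∫ y in Set.Icc (0:ℝ) 1,
        (∫ t in Set.Icc 0 y, fΔ t ∂ν) * (∫ t in Set.Icc 0 y, gΔ t ∂ν) ∂μ)
      = (∫ s in Set.Icc (0:ℝ) 1, (1 - Fdist μ s) * gΔ s ∂ν)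
          * (∫ y in Set.Icc (0:ℝ) 1, fΔ y ∂ν)
        - ((∫ y in Set.Icc (0:ℝ) 1, fΔ y * (Fdist μ y * ∫ t in Set.Icc 0 y, gΔ t ∂ν) ∂ν)
           - (∫ y in Set.Icc (0:ℝ) 1, fΔ y * ∫ t in Set.Icc 0 y, Fdist μ t * gΔ t ∂ν ∂ν)) := by
    rw [hMstar]
    have h1 : (∫ t in Set.Icc (0:ℝ) 1,
          fΔ t * (∫ y in Set.Icc t 1, (∫ s in Set.Icc 0 y, gΔ s ∂ν) ∂μ) ∂ν)
        = ∫ t in Set.Icc (0:ℝ) 1,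
            ((∫ s in Set.Icc (0:ℝ) 1, (1 - Fdist μ s) * gΔ s ∂ν) * fΔ t
              - (fΔ t * (Fdist μ t * ∫ s in Set.Icc 0 t, gΔ s ∂ν)
                 - fΔ t * ∫ s in Set.Icc 0 t, Fdist μ s * gΔ s ∂ν)) ∂ν := by
      apply setIntegral_congr_fun measurableSet_Icc
      intro t ht
      dsimp only
      rw [hinner t ht]
      ring
    have JK : Integrable (fun t => (∫ s in Set.Icc (0:ℝ) 1, (1 - Fdist μ s) * gΔ s ∂ν) * fΔ t)
        (ν.restrict (Set.Icc 0 1)) := IfΔ.const_mul _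
    have JD : Integrable (fun t => fΔ t * (Fdist μ t * ∫ s in Set.Icc 0 t, gΔ s ∂ν)
        - fΔ t * ∫ s in Set.Icc 0 t, Fdist μ s * gΔ s ∂ν) (ν.restrict (Set.Icc 0 1)) :=
      IfFΨ.sub IfΘ
    rw [h1, integral_sub JK JD, integral_sub IfFΨ IfΘ, integral_const_mul]
  have hSf2 : (∫ t in Set.Icc (0:ℝ) 1, fΔ t * (1 - Fdist μ t) ∂ν)
      = (∫ y in Set.Icc (0:ℝ) 1, fΔ y ∂ν)
        - (∫ y in Set.Icc (0:ℝ) 1, fΔ y * Fdist μ y ∂ν) := by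
    rw [← integral_sub IfΔ IfF]
    apply setIntegral_congr_fun measurableSet_Icc
    intro t ht
    dsimp only
    ring
  have hSg2 : (∫ t in Set.Icc (0:ℝ) 1, gΔ t * (1 - Fdist μ t) ∂ν)
      = ∫ s in Set.Icc (0:ℝ) 1, (1 - Fdist μ s) * gΔ s ∂ν := by
    apply setIntegral_congr_fun measurableSet_Icc
    intro t ht
    dsimp only
    ring
  rw [hL, hQ, hSf, hSf2, hSg, hSg2, hMfinal, hg1]
  ring
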